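/- The set of eigenvalues of the operator L ρ = (ρ_xx + r⋆^{−2}ρ) − (1/2π)∫_{𝕋}(ρ_xx + r⋆^{−2}ρ) dx on 2π-periodic C² functions equals {0} ∪ {r⋆^{−2} − k² : k ∈ ℤ \ {0}}. -/

import Mathlib

open Real

/-- The linearization of the averaged mean curvature flow at the cylinder of radius `c`. -/
noncomputable def Lop (c : ℝ) (ρ : ℝ → ℝ) (x : ℝ) : ℝ :=
  (deriv (deriv ρ) x + ρ x / c ^ 2) -
    (1 / (2 * π)) * ∫ y in (-π)..π, (deriv (deriv ρ) y + ρ y / c ^ 2)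

/-- Energy argument: a solution of `f'' = -ω² f` with zero initial data vanishes. -/
lemma energy_zero (ω : ℝ) (hω : ω ≠ 0) (f : ℝ → ℝ) (hf : Differentiable ℝ f)
    (hf' : Differentiable ℝ (deriv f))
    (hode : ∀ x, deriv (deriv f) x = -(ω^2) * f x)
    (h0 : f 0 = 0) (h0' : deriv f 0 = 0) : ∀ x, f x = 0 := by
  set E : ℝ → ℝ := fun x => (deriv f x)^2 + ω^2 * (f x)^2 with hE
  have hEd : ∀ x, HasDerivAt E 0 x := by
    intro x
    have h1 : HasDerivAt (fun x => (deriv f x)^2)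
        (2 * (deriv f x)^1 * deriv (deriv f) x) x := ((hf' x).hasDerivAt).pow 2
    have h2 : HasDerivAt (fun x => ω^2 * (f x)^2)
        (ω^2 * (2 * (f x)^1 * deriv f x)) x := (((hf x).hasDerivAt).pow 2).const_mul _
    have := h1.add h2
    exact this.congr_deriv (by rw [hode x]; ring)
  have hEc : ∀ x, E x = E 0 :=
    fun x => is_const_of_deriv_eq_zero (fun y => (hEd y).differentiableAt)
      (fun y => (hEd y).deriv) x 0
  intro x
  have hx : (deriv f x)^2 + ω^2 * (f x)^2 = (deriv f 0)^2 + ω^2 * (f 0)^2 := hEc x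
  rw [h0, h0'] at hx
  have hω2 : 0 < ω^2 := by positivity
  have h1 : (f x)^2 = 0 := by nlinarith [sq_nonneg (deriv f x), sq_nonneg (f x)]
  exact pow_eq_zero_iff (by norm_num) |>.mp h1

/-- A solution of `g' = -s g` satisfies `g x * exp (s x) = g 0`. -/
lemma exp_decay (s : ℝ) (g : ℝ → ℝ) (hg : Differentiable ℝ g)
    (hode : ∀ x, deriv g x = -s * g x) : ∀ x, g x * Real.exp (s * x) = g 0 := by
  have hd : ∀ x, HasDerivAt (fun x => g x * Real.exp (s * x)) 0 x := by
    intro x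
    have he : HasDerivAt (fun x => Real.exp (s * x)) (Real.exp (s*x) * s) x :=
      (Real.hasDerivAt_exp (s*x)).comp x ((hasDerivAt_id x).const_mul s) |>.congr_deriv
        (by ring)
    have := ((hg x).hasDerivAt).mul he
    exact this.congr_deriv (by rw [hode x]; ring)
  have := is_const_of_deriv_eq_zero (fun y => (hd y).differentiableAt)
    (fun y => (hd y).deriv)
  intro x
  simpa using this x 0

theorem spectrum_of_linearization (c : ℝ) (hc : 0 < c) :
    {μ : ℝ | ∃ ρ : ℝ → ℝ, ContDiff ℝ 2 ρ ∧ Function.Periodic ρ (2 * π) ∧ ρ ≠ 0 ∧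
        ∀ x, Lop c ρ x = μ * ρ x} =
      {0} ∪ {μ : ℝ | ∃ k : ℤ, k ≠ 0 ∧ μ = 1 / c ^ 2 - (k : ℝ) ^ 2} := by
  have hπ : (0:ℝ) < π := Real.pi_pos
  have hc2 : (0:ℝ) < c^2 := by positivity
  have hc2' : (c:ℝ)^2 ≠ 0 := ne_of_gt hc2
  ext μ
  simp only [Set.mem_setOf_eq, Set.mem_union, Set.mem_singleton_iff]
  constructor
  · rintro ⟨ρ, hρ, hper, hne, heq⟩
    -- regularity facts
    have hd1 : Differentiable ℝ ρ := hρ.differentiable (by norm_num)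
    have hd2 : Differentiable ℝ (deriv ρ) := by
      have := (contDiff_succ_iff_deriv.mp (show ContDiff ℝ (1+1) ρ from hρ)).2.2
      exact this.differentiable (by norm_num)
    have hcont2 : Continuous (deriv (deriv ρ)) := by
      have h1 := (contDiff_succ_iff_deriv.mp (show ContDiff ℝ (1+1) ρ from hρ)).2.2
      exact (contDiff_succ_iff_deriv.mp (show ContDiff ℝ (0+1) (deriv ρ) from h1)).2.2.continuous
    have hper' : ∀ x, deriv ρ (x + 2*π) = deriv ρ x := by
      intro x
      rw [← deriv_comp_add_const ρ (2*π) x]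
      congr 1
      funext y; exact hper y
    -- integrability
    have hint2 : IntervalIntegrable (fun y => deriv (deriv ρ) y) MeasureTheory.volume (-π) π :=
      hcont2.intervalIntegrable _ _
    have hintρ : IntervalIntegrable ρ MeasureTheory.volume (-π) π :=
      hd1.continuous.intervalIntegrable _ _
    have hintI : IntervalIntegrable (fun y => deriv (deriv ρ) y + ρ y / c ^ 2)
        MeasureTheory.volume (-π) π := by
      apply hint2.add
      exact (hd1.continuous.div_const _).intervalIntegrable _ _
    set I : ℝ := ∫ y in (-π)..π, (deriv (deriv ρ) y + ρ y / c ^ 2) with hI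
    set J : ℝ := ∫ y in (-π)..π, ρ y with hJ
    -- integrate the eigen-equation : μ J = 0
    have hμJ : μ * J = 0 := by
      have h1 : (∫ x in (-π)..π, Lop c ρ x) = ∫ x in (-π)..π, μ * ρ x := by
        congr 1; funext x; exact heq x
      have h2 : (∫ x in (-π)..π, Lop c ρ x) = 0 := by
        unfold Lop
        rw [intervalIntegral.integral_sub hintI intervalIntegrable_const,
          intervalIntegral.integral_const, ← hI, smul_eq_mul]
        have hπ' : π - -π = 2*π := by ring
        rw [hπ']
        field_simp
        ring
      rw [h2] at h1
      rw [intervalIntegral.integral_const_mul] at h1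
      exact h1.symm
    -- ∫ ρ'' = 0
    have hintdd : (∫ y in (-π)..π, deriv (deriv ρ) y) = 0 := by
      rw [intervalIntegral.integral_deriv_eq_sub (fun x _ => (hd2 x)) hint2]
      have h1 := hper' (-π)
      have h2 : -π + 2*π = π := by ring
      rw [h2] at h1
      rw [h1]; ring
    by_cases hμ0 : μ = 0
    · left; exact hμ0
    · right
      have hJ0 : J = 0 := by
        rcases mul_eq_zero.mp hμJ with h | h
        · exact absurd h hμ0
        · exact h
      have hI0 : I = 0 := by
        rw [hI, intervalIntegral.integral_add hint2
          ((hd1.continuous.div_const _).intervalIntegrable _ _), hintdd]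
        have : (∫ y in (-π)..π, ρ y / c^2) = J / c^2 := by
          rw [hJ, ← intervalIntegral.integral_div]
        rw [this, hJ0]; ring
      set lam : ℝ := μ - 1 / c^2 with hlam
      have hode : ∀ x, deriv (deriv ρ) x = lam * ρ x := by
        intro x
        have h := heq x
        unfold Lop at h
        rw [← hI, hI0] at h
        rw [hlam]
        field_simp at h ⊢
        have h' : (deriv (deriv ρ) x * c ^ 2 - ρ x * (c ^ 2 * μ - 1)) * (2*π) = 0 := by
          linear_combination h
        rcases mul_eq_zero.mp h' with h'' | h''
        · linarith
        · linarith
      rcases lt_trichotomy lam 0 with hl | hl | hl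
      · -- oscillatory case
        set ω : ℝ := Real.sqrt (-lam) with hω
        have hω0 : 0 < ω := Real.sqrt_pos.mpr (by linarith)
        have hω0' : ω ≠ 0 := ne_of_gt hω0
        have hω2 : ω^2 = -lam := Real.sq_sqrt (by linarith)
        have hlamω : lam = -ω^2 := by linarith
        set a : ℝ := ρ 0 with ha
        set b : ℝ := deriv ρ 0 / ω with hb
        set f : ℝ → ℝ := fun x => ρ x - a * Real.cos (ω*x) - b * Real.sin (ω*x) with hf
        set F : ℝ → ℝ := fun x => deriv ρ x + a * ω * Real.sin (ω*x) - b * ω * Real.cos (ω*x)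
          with hF
        have hcosd : ∀ x, HasDerivAt (fun t => Real.cos (ω*t)) (-(ω * Real.sin (ω*x))) x := by
          intro x
          exact (Real.hasDerivAt_cos (ω*x)).comp x ((hasDerivAt_id x).const_mul ω)
            |>.congr_deriv (by ring)
        have hsind : ∀ x, HasDerivAt (fun t => Real.sin (ω*t)) (ω * Real.cos (ω*x)) x := by
          intro x
          exact (Real.hasDerivAt_sin (ω*x)).comp x ((hasDerivAt_id x).const_mul ω)
            |>.congr_deriv (by ring)
        have hfd : ∀ x, HasDerivAt f (F x) x := by
          intro x
          have h := ((hd1 x).hasDerivAt.sub ((hcosd x).const_mul a)).sub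
            ((hsind x).const_mul b)
          have h2 : deriv ρ x - a * (-(ω * Real.sin (ω*x))) - b * (ω * Real.cos (ω*x)) = F x := by
            rw [hF]; ring
          rw [h2] at h
          exact h
        have hderivf : deriv f = F := funext fun x => (hfd x).deriv
        have hFd : ∀ x, HasDerivAt F (-(ω^2) * f x) x := by
          intro x
          have h := ((hd2 x).hasDerivAt.add ((hsind x).const_mul (a*ω))).sub
            ((hcosd x).const_mul (b*ω))
          have h2 : deriv (deriv ρ) x + a*ω*(ω * Real.cos (ω*x)) - b*ω*(-(ω * Real.sin (ω*x)))
              = -(ω^2) * f x := by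
            rw [hode x, hlamω, hf]; ring
          rw [h2] at h
          exact h
        have hfz : ∀ x, f x = 0 := by
          apply energy_zero ω hω0' f (fun x => (hfd x).differentiableAt)
          · rw [hderivf]; exact fun x => (hFd x).differentiableAt
          · intro x; rw [hderivf, (hFd x).deriv]
          · rw [hf]; simp [ha]
          · rw [hderivf, hF]
            simp only []
            rw [hb]
            field_simp
            simp
        have hρeq : ∀ x, ρ x = a * Real.cos (ω*x) + b * Real.sin (ω*x) := by
          intro x
          have h := hfz x
          rw [hf] at h
          simp only [] at h
          linarith
        have hFz : ∀ x, F x = 0 := by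
          intro x
          rw [← hderivf]
          have hfz' : f = fun _ => (0:ℝ) := funext hfz
          rw [hfz']
          simp
        have hρ'eq : ∀ x, deriv ρ x = -(a * ω * Real.sin (ω*x)) + b * ω * Real.cos (ω*x) := by
          intro x
          have h := hFz x
          rw [hF] at h
          simp only [] at h
          linarith
        have hab : a^2 + b^2 ≠ 0 := by
          intro habs
          have ha0 : a = 0 := by nlinarith [sq_nonneg a, sq_nonneg b]
          have hb0 : b = 0 := by nlinarith [sq_nonneg a, sq_nonneg b]
          apply hne
          funext x
          rw [Pi.zero_apply, hρeq x, ha0, hb0]; ring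
        set θ : ℝ := ω * (2*π) with hθ
        -- periodicity relations
        have hper0 := hper 0
        rw [hρeq (0 + 2*π), hρeq 0] at hper0
        rw [show ω*(0+2*π) = θ by rw [hθ]; ring, mul_zero, Real.cos_zero, Real.sin_zero]
          at hper0
        -- hper0 : a*cos θ + b*sin θ = a*1 + b*0
        have hper0' := hper' 0
        rw [hρ'eq (0 + 2*π), hρ'eq 0] at hper0'
        rw [show ω*(0+2*π) = θ by rw [hθ]; ring, mul_zero, Real.cos_zero, Real.sin_zero]
          at hper0'
        -- hper0' : -(a*ω*sin θ) + b*ω*cos θ = -(a*ω*0) + b*ω*1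
        have hcosθ : Real.cos θ = 1 := by
          have h5 : (a^2+b^2) * Real.cos θ * ω = (a^2+b^2) * ω := by
            linear_combination (a*ω) * hper0 + b * hper0'
          have h6 := mul_right_cancel₀ hω0' h5
          exact mul_left_cancel₀ hab (by rw [h6, mul_one])
        rw [Real.cos_eq_one_iff] at hcosθ
        obtain ⟨n, hn⟩ := hcosθ
        have h2π : (2*π:ℝ) ≠ 0 := by positivity
        have hωn : ω = n := by
          have h7 : ω * (2*π) = (n:ℝ) * (2*π) := by rw [← hθ, ← hn]
          exact mul_right_cancel₀ h2π h7
        refine ⟨n, ?_, ?_⟩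
        · intro hn0
          rw [hn0] at hωn
          simp at hωn
          exact absurd hωn hω0'
        · have h8 : lam = -(n:ℝ)^2 := by rw [hlamω, hωn]
          rw [hlam] at h8
          linarith
      · -- lam = 0 : contradiction
        exfalso
        have hd0 : ∀ x, deriv (deriv ρ) x = 0 := by
          intro x; rw [hode x, hl]; ring
        have hconst' : ∀ x, deriv ρ x = deriv ρ 0 :=
          fun x => is_const_of_deriv_eq_zero hd2 hd0 x 0
        set b : ℝ := deriv ρ 0 with hbb
        have hlin : ∀ x, ρ x = b * x + ρ 0 := by
          intro x
          have hgd : ∀ y, HasDerivAt (fun x => ρ x - b * x) 0 y := by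
            intro y
            have h := (hd1 y).hasDerivAt.sub ((hasDerivAt_id y).const_mul b)
            exact h.congr_deriv (by rw [hconst' y]; simp)
          have h := is_const_of_deriv_eq_zero (fun y => (hgd y).differentiableAt)
            (fun y => (hgd y).deriv) x 0
          simp at h
          linarith
        have hb0 : b = 0 := by
          have h := hper 0
          rw [hlin (0 + 2*π), hlin 0] at h
          have h2π : (0:ℝ) < 2*π := by positivity
          nlinarith
        have hρ0 : ρ 0 = 0 := by
          have hJc : J = (2*π) * ρ 0 := by
            rw [hJ]
            have hcc : (fun y => ρ y) = fun _ => ρ 0 := by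
              funext y; rw [hlin y, hb0]; ring
            rw [hcc, intervalIntegral.integral_const, smul_eq_mul]
            ring
          rw [hJ0] at hJc
          have h2π : (2*π:ℝ) ≠ 0 := by positivity
          rcases mul_eq_zero.mp hJc.symm with h | h
          · exact absurd h h2π
          · exact h
        apply hne
        funext x
        rw [Pi.zero_apply, hlin x, hb0, hρ0]; ring
      · -- lam > 0 : contradiction
        exfalso
        set s : ℝ := Real.sqrt lam with hs
        have hs0 : 0 < s := Real.sqrt_pos.mpr hl
        have hs2 : s^2 = lam := Real.sq_sqrt hl.le
        set g : ℝ → ℝ := fun x => deriv ρ x - s * ρ x with hg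
        set h : ℝ → ℝ := fun x => deriv ρ x + s * ρ x with hh
        have hgdiff : Differentiable ℝ g := hd2.sub (hd1.const_mul s)
        have hhdiff : Differentiable ℝ h := hd2.add (hd1.const_mul s)
        have hgper : ∀ x, g (x + 2*π) = g x := by
          intro x; rw [hg]; simp only [hper' x, hper x]
        have hhper : ∀ x, h (x + 2*π) = h x := by
          intro x; rw [hh]; simp only [hper' x, hper x]
        have hgode : ∀ x, deriv g x = -s * g x := by
          intro x
          have hd : HasDerivAt g (deriv (deriv ρ) x - s * deriv ρ x) x :=
            (hd2 x).hasDerivAt.sub (((hd1 x).hasDerivAt).const_mul s)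
          rw [hd.deriv, hode x, hg]
          simp only []
          linear_combination (-(ρ x)) * hs2
        have hhode : ∀ x, deriv h x = -(-s) * h x := by
          intro x
          have hd : HasDerivAt h (deriv (deriv ρ) x + s * deriv ρ x) x :=
            (hd2 x).hasDerivAt.add (((hd1 x).hasDerivAt).const_mul s)
          rw [hd.deriv, hode x, hh]
          simp only []
          linear_combination (-(ρ x)) * hs2
        have hg0 : g 0 = 0 := by
          have h1 := exp_decay s g hgdiff hgode (-(2*π))
          have h2 : g (-(2*π)) = g 0 := by
            have h3 := hgper (-(2*π))
            simpa using h3.symm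
          rw [h2] at h1
          have hexp : Real.exp (s * -(2*π)) < 1 := by
            rw [Real.exp_lt_one_iff]
            nlinarith
          have h4 : g 0 * (Real.exp (s * -(2*π)) - 1) = 0 := by linear_combination h1
          rcases mul_eq_zero.mp h4 with h5 | h5
          · exact h5
          · linarith
        have hgz : ∀ x, g x = 0 := by
          intro x
          have h1 := exp_decay s g hgdiff hgode x
          rw [hg0] at h1
          rcases mul_eq_zero.mp h1 with h5 | h5
          · exact h5
          · exact absurd h5 (Real.exp_ne_zero _)
        have hh0 : h 0 = 0 := by
          have h1 := exp_decay (-s) h hhdiff hhode (2*π)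
          have h2 : h (2*π) = h 0 := by
            have h3 := hhper 0
            simpa using h3
          rw [h2] at h1
          have hexp : Real.exp (-s * (2*π)) < 1 := by
            rw [Real.exp_lt_one_iff]
            nlinarith
          have h4 : h 0 * (Real.exp (-s * (2*π)) - 1) = 0 := by linear_combination h1
          rcases mul_eq_zero.mp h4 with h5 | h5
          · exact h5
          · linarith
        have hhz : ∀ x, h x = 0 := by
          intro x
          have h1 := exp_decay (-s) h hhdiff hhode x
          rw [hh0] at h1
          rcases mul_eq_zero.mp h1 with h5 | h5
          · exact h5
          · exact absurd h5 (Real.exp_ne_zero _)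
        apply hne
        funext x
        have hgx := hgz x
        have hhx := hhz x
        rw [hg] at hgx
        rw [hh] at hhx
        simp only [] at hgx hhx
        have h2s : (2:ℝ) * s ≠ 0 := by
          have : (0:ℝ) < 2*s := by linarith
          exact ne_of_gt this
        have h9 : (2*s) * ρ x = 0 := by linarith
        rcases mul_eq_zero.mp h9 with h5 | h5
        · exact absurd h5 h2s
        · simpa using h5
  · rintro (hμ | ⟨k, hk, hμ⟩)
    · -- μ = 0 : constant eigenfunction
      refine ⟨fun _ => 1, contDiff_const, fun x => rfl, ?_, ?_⟩
      · intro habs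
        have := congrFun habs 0
        simp at this
      · intro x
        unfold Lop
        rw [hμ]
        have hdc : deriv (deriv (fun _ : ℝ => (1:ℝ))) = fun _ => 0 := by
          simp
        rw [hdc]
        simp only [Pi.zero_apply]
        rw [intervalIntegral.integral_const]
        have hπ' : π - -π = 2*π := by ring
        rw [hπ', smul_eq_mul]
        have h2π : (2*π:ℝ) ≠ 0 := by positivity
        field_simp
        ring
    · -- μ = 1/c² - k² : cosine eigenfunction
      have hkR : (k:ℝ) ≠ 0 := Int.cast_ne_zero.mpr hk
      refine ⟨fun x => Real.cos ((k:ℝ) * x), ?_, ?_, ?_, ?_⟩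
      · exact Real.contDiff_cos.comp (contDiff_const.mul contDiff_id)
      · intro x
        show Real.cos ((k:ℝ) * (x + 2*π)) = Real.cos ((k:ℝ)*x)
        have h1 : (k:ℝ) * (x + 2*π) = (k:ℝ)*x + (k:ℤ) * (2*π) := by ring
        rw [h1, Real.cos_add_int_mul_two_pi]
      · intro habs
        have := congrFun habs 0
        simp at this
      · intro x
        have hD1 : deriv (fun x => Real.cos ((k:ℝ) * x))
            = fun x => -(k:ℝ) * Real.sin ((k:ℝ)*x) := by
          funext y
          have h1 : HasDerivAt (fun x => Real.cos ((k:ℝ) * x)) (-(k:ℝ) * Real.sin ((k:ℝ)*y)) y :=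
            (Real.hasDerivAt_cos ((k:ℝ)*y)).comp y ((hasDerivAt_id y).const_mul (k:ℝ))
              |>.congr_deriv (by ring)
          exact h1.deriv
        have hD2 : deriv (deriv (fun x => Real.cos ((k:ℝ) * x)))
            = fun x => -(k:ℝ)^2 * Real.cos ((k:ℝ)*x) := by
          rw [hD1]
          funext y
          have h1 : HasDerivAt (fun x => -(k:ℝ) * Real.sin ((k:ℝ)*x))
              (-(k:ℝ)^2 * Real.cos ((k:ℝ)*y)) y := by
            have h2 := ((Real.hasDerivAt_sin ((k:ℝ)*y)).comp y
              ((hasDerivAt_id y).const_mul (k:ℝ))).const_mul (-(k:ℝ))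
            exact h2.congr_deriv (by ring)
          exact h1.deriv
        unfold Lop
        rw [hD2]
        have hInteg : (fun y => -(k:ℝ)^2 * Real.cos ((k:ℝ)*y) + Real.cos ((k:ℝ)*y) / c^2)
            = fun y => (1/c^2 - (k:ℝ)^2) * Real.cos ((k:ℝ)*y) := by
          funext y; field_simp; ring
        simp only [hInteg]
        rw [intervalIntegral.integral_const_mul]
        have hIcos : (∫ y in (-π)..π, Real.cos ((k:ℝ)*y)) = 0 := by
          rw [intervalIntegral.integral_comp_mul_left (fun x => Real.cos x) hkR]
          simp only [integral_cos]
          have h1 : Real.sin ((k:ℝ)*π) = 0 := Real.sin_int_mul_pi k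
          have h2 : Real.sin ((k:ℝ)*(-π)) = 0 := by
            rw [show (k:ℝ)*(-π) = -((k:ℝ)*π) by ring, Real.sin_neg, h1]; ring
          rw [h1, h2]
          simp
        rw [hIcos, hμ]
        field_simp
        ring
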